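/- For every i ≥ 0 and every state s, the value-iteration iterates satisfy V_i(s) ≥ min(i, s_N). In particular, the limiting value function is bounded below by the number of active terminals s_N. -/

import Mathlib

open scoped BigOperators

/-- A state of the reservation process: `s.1 + 1` clusters (so at least one),
with the number of active terminals in each cluster given by `s.2`. -/
abbrev RState : Type := Σ m : ℕ, (Fin (m + 1) → ℕ)

/-- `sN s` is the total number of active terminals in state `s`. -/
def sN (s : RState) : ℕ := ∑ j, s.2 j

/-- An action assigns a transmission probability to each cluster; we record it as a
function on `ℕ` and require it to take values in `[0,1]` on the first `M` coordinates. -/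
def IsActionOn (M : ℕ) (p : ℕ → ℝ) : Prop := ∀ j < M, 0 ≤ p j ∧ p j ≤ 1

/-- The splitting weight `w(η, η', p)`: the probability that in each cluster `i` exactly
`η' i` of the `η i` terminals do not transmit, each terminal of cluster `i`
transmitting independently with probability `p i`. -/
noncomputable def w {M : ℕ} (η η' : Fin M → ℕ) (p : ℕ → ℝ) : ℝ :=
  ∏ i, (Nat.choose (η i) (η' i) : ℝ) * (1 - p i.val) ^ (η' i) * (p i.val) ^ (η i - η' i)

/-- The possible outcomes at state `s`: a choice, for each cluster, of how many
terminals do not transmit (at most the cluster size). -/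
abbrev Outcome (s : RState) : Type := ∀ j : Fin (s.1 + 1), Fin (s.2 j + 1)

/-- The cluster configuration `η'` of non-transmitters determined by an outcome. -/
def outEta {s : RState} (f : Outcome s) : Fin (s.1 + 1) → ℕ := fun j => (f j : ℕ)

/-- The next state resulting from state `s` when `η' j` terminals of cluster `j` kept
silent: idle (no transmitter) and success (one transmitter) keep the clusters, while a
collision (at least two transmitters) moves all colliding terminals to a new cluster. -/
def step (s : RState) (η' : Fin (s.1 + 1) → ℕ) : RState :=
  if (∑ j, (s.2 j - η' j)) ≤ 1 then ⟨s.1, η'⟩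
  else ⟨s.1 + 1, Fin.snoc η' (∑ j, (s.2 j - η' j))⟩

/-- Transition probability `P(s' | s, p)` of the reservation process. -/
noncomputable def transP (s : RState) (p : ℕ → ℝ) (s' : RState) : ℝ :=
  ∑ f : Outcome s, if step s (outEta f) = s' then w s.2 (outEta f) p else 0

/-- The value-iteration iterates `V_i` of the genie-aided Goal-MDP:
`V_0 = 0`; target states (no active terminals) have value `0`; otherwise
`V_{i+1}(s)` is the infimum over actions of `1 + ∑_{s'} P(s' | s, p) V_i(s')`. -/
noncomputable def Vit : ℕ → RState → ℝ
  | 0, _ => 0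
  | i + 1, s =>
    if sN s = 0 then 0
    else sInf { x : ℝ | ∃ p : ℕ → ℝ, IsActionOn (s.1 + 1) p ∧
      x = 1 + ∑ f : Outcome s, w s.2 (outEta f) p * Vit i (step s (outEta f)) }

lemma w_nonneg {s : RState} {p : ℕ → ℝ} (hp : IsActionOn (s.1 + 1) p) (f : Outcome s) :
    0 ≤ w s.2 (outEta f) p := by
  apply Finset.prod_nonneg
  intro i _
  obtain ⟨h0, h1⟩ := hp i.val i.isLt
  have : (0:ℝ) ≤ 1 - p i.val := by linarith
  positivity

lemma sum_w_eq_one (s : RState) (p : ℕ → ℝ) :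
    ∑ f : Outcome s, w s.2 (outEta f) p = 1 := by
  have : ∑ f : Outcome s, w s.2 (outEta f) p
      = ∏ j : Fin (s.1 + 1), ∑ k : Fin (s.2 j + 1),
        (Nat.choose (s.2 j) (k : ℕ) : ℝ) * (1 - p j.val) ^ (k : ℕ) * (p j.val) ^ (s.2 j - (k : ℕ)) := by
    rw [Fintype.prod_sum]
    rfl
  rw [this]
  apply Finset.prod_eq_one
  intro j _
  rw [Fin.sum_univ_eq_sum_range (fun k => (Nat.choose (s.2 j) k : ℝ) * (1 - p j.val) ^ k * (p j.val) ^ (s.2 j - k))]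
  have h := add_pow (1 - p j.val) (p j.val) (s.2 j)
  simp only [sub_add_cancel, one_pow] at h
  calc ∑ k ∈ Finset.range (s.2 j + 1),
        (Nat.choose (s.2 j) k : ℝ) * (1 - p j.val) ^ k * (p j.val) ^ (s.2 j - k)
      = ∑ k ∈ Finset.range (s.2 j + 1),
        (1 - p j.val) ^ k * (p j.val) ^ (s.2 j - k) * (Nat.choose (s.2 j) k : ℝ) :=
        Finset.sum_congr rfl (fun k _ => by ring)
    _ = 1 := h.symm

lemma sN_step_ge (s : RState) (f : Outcome s) :
    sN s - 1 ≤ sN (step s (outEta f)) := by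
  have hle : ∀ j, s.2 j ≤ outEta f j + (s.2 j - outEta f j) := fun j => le_add_tsub
  unfold step
  split_ifs with h
  · have : sN s ≤ sN ⟨s.1, outEta f⟩ + 1 := by
      calc sN s = ∑ j, s.2 j := rfl
        _ ≤ ∑ j, (outEta f j + (s.2 j - outEta f j)) := Finset.sum_le_sum (fun j _ => hle j)
        _ = (∑ j, outEta f j) + ∑ j, (s.2 j - outEta f j) := Finset.sum_add_distrib
        _ ≤ sN ⟨s.1, outEta f⟩ + 1 := by exact add_le_add_right h _
    omega
  · have hs : sN ⟨s.1 + 1, Fin.snoc (outEta f) (∑ j, (s.2 j - outEta f j))⟩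
        = (∑ j, outEta f j) + ∑ j, (s.2 j - outEta f j) := by
      show (∑ j : Fin (s.1 + 1 + 1),
        Fin.snoc (outEta f) (∑ j, (s.2 j - outEta f j)) j) = _
      rw [Fin.sum_univ_castSucc]
      simp [Fin.snoc_castSucc, Fin.snoc_last]
    have : sN s ≤ (∑ j, outEta f j) + ∑ j, (s.2 j - outEta f j) := by
      calc sN s = ∑ j, s.2 j := rfl
        _ ≤ ∑ j, (outEta f j + (s.2 j - outEta f j)) := Finset.sum_le_sum (fun j _ => hle j)
        _ = (∑ j, outEta f j) + ∑ j, (s.2 j - outEta f j) := Finset.sum_add_distrib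
    omega

/-- For every `i ≥ 0` and every state `s`, the value-iteration iterates satisfy
`V_i(s) ≥ min(i, s_N)`; in particular, any limiting value function is bounded below
by the number of active terminals `s_N`. -/
theorem valueIteration_lowerBound :
    (∀ (i : ℕ) (s : RState), min (i : ℝ) (sN s : ℝ) ≤ Vit i s) ∧
    (∀ (s : RState) (L : ℝ),
      Filter.Tendsto (fun i => Vit i s) Filter.atTop (nhds L) → (sN s : ℝ) ≤ L) := by
  have key : ∀ (i : ℕ) (s : RState), min (i : ℝ) (sN s : ℝ) ≤ Vit i s := by
    intro i
    induction i with
    | zero => intro s; simp [Vit]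
    | succ i ih =>
      intro s
      by_cases h0 : sN s = 0
      · simp [Vit, h0]
      · have hV : Vit (i + 1) s = sInf { x : ℝ | ∃ p : ℕ → ℝ, IsActionOn (s.1 + 1) p ∧
            x = 1 + ∑ f : Outcome s, w s.2 (outEta f) p * Vit i (step s (outEta f)) } := by
          simp [Vit, h0]
        rw [hV]
        apply le_csInf
        · exact ⟨_, fun _ => 0, fun j _ => ⟨le_refl 0, zero_le_one⟩, rfl⟩
        · rintro x ⟨p, hp, rfl⟩
          set c : ℝ := min (i : ℝ) ((sN s : ℝ) - 1) with hc
          have hterm : ∀ f : Outcome s,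
              w s.2 (outEta f) p * c ≤ w s.2 (outEta f) p * Vit i (step s (outEta f)) := by
            intro f
            apply mul_le_mul_of_nonneg_left _ (w_nonneg hp f)
            have h1 : ((sN s : ℝ) - 1) ≤ (sN (step s (outEta f)) : ℝ) := by
              have := sN_step_ge s f
              have h2 : ((sN s - 1 : ℕ) : ℝ) ≤ (sN (step s (outEta f)) : ℝ) := by
                exact_mod_cast this
              rw [Nat.cast_sub (by omega)] at h2
              simpa using h2
            calc c ≤ min (i : ℝ) (sN (step s (outEta f)) : ℝ) :=
                  min_le_min (le_refl _) h1
              _ ≤ Vit i (step s (outEta f)) := ih _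
          have hsum : c ≤ ∑ f : Outcome s, w s.2 (outEta f) p * Vit i (step s (outEta f)) := by
            calc c = (∑ f : Outcome s, w s.2 (outEta f) p) * c := by
                  rw [sum_w_eq_one]; ring
              _ = ∑ f : Outcome s, w s.2 (outEta f) p * c := by rw [Finset.sum_mul]
              _ ≤ _ := Finset.sum_le_sum (fun f _ => hterm f)
          have hmin : min ((i + 1 : ℕ) : ℝ) (sN s : ℝ) = 1 + c := by
            rw [hc]
            push_cast
            rw [← min_add_add_left 1 (i : ℝ) ((sN s : ℝ) - 1)]
            ring_nf
          rw [hmin]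
          linarith
  refine ⟨key, fun s L hT => ?_⟩
  apply ge_of_tendsto hT
  rw [Filter.eventually_atTop]
  refine ⟨sN s, fun i hi => ?_⟩
  have := key i s
  rwa [min_eq_right (by exact_mod_cast hi)] at this
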